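/- Let X be a metric space and p, x, y, z ∈ X with x ≠ p, y ≠ p, z ≠ p. If the comparison angles satisfy ∠̃p(x,y) + ∠̃p(y,z) + ∠̃p(z,x) ≤ 2π (inequality (1+3)), then the quadruple (p; x, y, z) satisfies inequality (*): dist(p,x)² + dist(p,y)² + dist(p,z)² ≥ (1/3)·(dist(x,y)² + dist(y,z)² + dist(z,x)²). (That is, condition (1+3) at p implies condition (*); in the notation of the paper, 𝔅 ⊆ 𝔄.) -/

import Mathlib

open Real

/-- The comparison (model) angle at `p` between `x` and `y` in a metric space. -/
noncomputable def comparisonAngle {X : Type*} [MetricSpace X] (p x y : X) : ℝ :=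
  Real.arccos ((dist p x ^ 2 + dist p y ^ 2 - dist x y ^ 2) / (2 * dist p x * dist p y))

lemma key_quadratic (a b c α β γ : ℝ) (ha : 0 ≤ a) (hb : 0 ≤ b) (hc : 0 ≤ c)
    (hα0 : 0 ≤ α) (hαπ : α ≤ π) (hβ0 : 0 ≤ β) (hβπ : β ≤ π)
    (hγ0 : 0 ≤ γ) (hγπ : γ ≤ π) (hsum : α + β + γ ≤ 2 * π) :
    0 ≤ a^2 + b^2 + c^2 + 2*a*b*Real.cos α + 2*b*c*Real.cos β + 2*c*a*Real.cos γ := by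
  rcases le_or_gt (β + γ) π with hab | hab
  · -- γ ≤ π - β, so cos γ ≥ -cos β; cos α ≥ -1
    have h1 : Real.cos (π - β) ≤ Real.cos γ :=
      Real.cos_le_cos_of_nonneg_of_le_pi hγ0 (by linarith) (by linarith)
    rw [Real.cos_pi_sub] at h1
    have h2 : (-1 : ℝ) ≤ Real.cos α := Real.neg_one_le_cos α
    have h3 : 2*c*a*(-Real.cos β) ≤ 2*c*a*Real.cos γ := by
      apply mul_le_mul_of_nonneg_left h1; positivity
    have h4 : 2*a*b*(-1 : ℝ) ≤ 2*a*b*Real.cos α := by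
      apply mul_le_mul_of_nonneg_left h2; positivity
    nlinarith [sq_nonneg (b - a + c*Real.cos β), sq_nonneg (c*Real.sin β),
      Real.sin_sq_add_cos_sq β]
  · -- α ≤ 2π - β - γ, so cos α ≥ cos(β+γ)
    have h1 : Real.cos (2*π - (β + γ)) ≤ Real.cos α :=
      Real.cos_le_cos_of_nonneg_of_le_pi hα0 (by linarith) (by linarith)
    have h2 : Real.cos (2*π - (β + γ)) = Real.cos (β + γ) := by
      rw [Real.cos_sub, Real.cos_two_pi, Real.sin_two_pi]; ring
    rw [h2, Real.cos_add] at h1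
    have h3 : 2*a*b*(Real.cos β * Real.cos γ - Real.sin β * Real.sin γ)
        ≤ 2*a*b*Real.cos α := by
      apply mul_le_mul_of_nonneg_left h1; positivity
    nlinarith [sq_nonneg (c + a*Real.cos γ + b*Real.cos β),
      sq_nonneg (a*Real.sin γ - b*Real.sin β),
      Real.sin_sq_add_cos_sq β, Real.sin_sq_add_cos_sq γ]

lemma law_of_cos {X : Type*} [MetricSpace X] (p x y : X) (hx : x ≠ p) (hy : y ≠ p) :
    dist x y ^ 2 = dist p x ^ 2 + dist p y ^ 2
      - 2 * dist p x * dist p y * Real.cos (comparisonAngle p x y) := by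
  have ha : 0 < dist p x := dist_pos.mpr (Ne.symm hx)
  have hb : 0 < dist p y := dist_pos.mpr (Ne.symm hy)
  have t1 : dist x y ≤ dist p x + dist p y := by
    rw [dist_comm p x]; exact dist_triangle x p y
  have t2 : dist p x ≤ dist p y + dist x y := by
    rw [dist_comm x y]; exact dist_triangle p y x
  have t3 : dist p y ≤ dist p x + dist x y := dist_triangle p x y
  have hd : 0 ≤ dist x y := dist_nonneg
  unfold comparisonAngle
  rw [Real.cos_arccos]
  · field_simp; ring
  · rw [le_div_iff₀ (by positivity)]; nlinarith
  · rw [div_le_one (by positivity)]; nlinarith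

theorem star_ineq_of_angle_sum_le_two_pi
    {X : Type*} [MetricSpace X] (p x y z : X)
    (hx : x ≠ p) (hy : y ≠ p) (hz : z ≠ p)
    (h : comparisonAngle p x y + comparisonAngle p y z + comparisonAngle p z x
      ≤ 2 * π) :
    dist p x ^ 2 + dist p y ^ 2 + dist p z ^ 2 ≥
      (1 / 3) * (dist x y ^ 2 + dist y z ^ 2 + dist z x ^ 2) := by
  have e1 := law_of_cos p x y hx hy
  have e2 := law_of_cos p y z hy hz
  have e3 := law_of_cos p z x hz hx
  have key := key_quadratic (dist p x) (dist p y) (dist p z)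
    (comparisonAngle p x y) (comparisonAngle p y z) (comparisonAngle p z x)
    dist_nonneg dist_nonneg dist_nonneg
    (Real.arccos_nonneg _) (Real.arccos_le_pi _)
    (Real.arccos_nonneg _) (Real.arccos_le_pi _)
    (Real.arccos_nonneg _) (Real.arccos_le_pi _) h
  nlinarith [key]
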